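/- arXiv:2404.17863 — 2 statements merged into one kernel-verified Lean document; each statement's English description precedes it below -/
import Mathlib

section
/- Let T ∈ B(H) be any bounded operator that commutes with each of the six operators A, A*, B, B*, D, D*. Then for all d, d′ ∈ ℕ and i, i′, j, j′ ∈ ℤ, the matrix coefficients of T satisfy ⟨e_{d′,i′,j′}, T e_{d,i,j}⟩ = δ_{d,d′} · e^{2π√−1·j′(i−i′)θ} · ⟨e_{0,0,0}, T e_{0,i−i′,j−j′}⟩ (where δ_{d,d′} is the Kronecker delta). -/
open scoped InnerProductSpace
noncomputable section

/-- The Hilbert space `H = ℓ²(ℕ × ℤ × ℤ)`. -/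
abbrev UqH : Type := lp (fun _ : ℕ × ℤ × ℤ => ℂ) 2

/-- The standard orthonormal basis vectors `e_{d,i,j}` of `H`. -/
def e (d : ℕ) (i j : ℤ) : UqH := lp.single 2 (d, i, j) 1

/-- any bounded operator `T` on `H` commuting with `A, A*, B, B*, D, D*`
has matrix coefficients
`⟨e_{d′,i′,j′}, T e_{d,i,j}⟩ = δ_{d,d′} · e^{2π√−1·j′(i−i′)θ} · ⟨e_{0,0,0}, T e_{0,i−i′,j−j′}⟩`. -/
theorem commutant_matrix_coefficients
    (q : ℂ) (hq0 : 0 < ‖q‖) (hq1 : ‖q‖ < 1)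
    (θ : ℝ) (hθ : θ = Complex.arg q / Real.pi)
    (A B D : UqH →L[ℂ] UqH)
    (hA : ∀ (i : ℕ) (j k : ℤ),
      A (e i j k) = ((Real.sqrt (1 - ‖q‖ ^ (2 * (i + 1))) : ℝ) : ℂ) • e (i + 1) j k)
    (hB : ∀ (i : ℕ) (j k : ℤ), B (e i j k) = (q ^ i) • e i (j + 1) k)
    (hD : ∀ (i : ℕ) (j k : ℤ),
      D (e i j k) = Complex.exp (-(2 * (Real.pi : ℂ) * (θ : ℂ) * (j : ℂ)) * Complex.I) • e i j (k + 1))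
    (hAs : ∀ (i : ℕ) (j k : ℤ),
      (star A) (e i j k) = ((Real.sqrt (1 - ‖q‖ ^ (2 * i)) : ℝ) : ℂ) • e (i - 1) j k)
    (hBs : ∀ (i : ℕ) (j k : ℤ), (star B) (e i j k) = ((starRingEnd ℂ) q ^ i) • e i (j - 1) k)
    (hDs : ∀ (i : ℕ) (j k : ℤ),
      (star D) (e i j k) = Complex.exp ((2 * (Real.pi : ℂ) * (θ : ℂ) * (j : ℂ)) * Complex.I) • e i j (k - 1))
    (T : UqH →L[ℂ] UqH)
    (hTA : T * A = A * T) (hTAs : T * star A = star A * T)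
    (hTB : T * B = B * T) (hTBs : T * star B = star B * T)
    (hTD : T * D = D * T) (hTDs : T * star D = star D * T) :
    ∀ (d d' : ℕ) (i i' j j' : ℤ),
      ⟪e d' i' j', T (e d i j)⟫_ℂ =
        (if d = d' then (1 : ℂ) else 0) *
          Complex.exp ((2 * (Real.pi : ℂ) * (j' : ℂ) * ((i : ℂ) - (i' : ℂ)) * (θ : ℂ)) * Complex.I) *
          ⟪e 0 0 0, T (e 0 (i - i') (j - j'))⟫_ℂ := by
  -- adjoint machinery
  have hadj : ∀ (M : UqH →L[ℂ] UqH) (x y : UqH), ⟪x, M y⟫_ℂ = ⟪(star M) x, y⟫_ℂ := by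
    intro M x y
    rw [ContinuousLinearMap.star_eq_adjoint]
    exact (ContinuousLinearMap.adjoint_inner_left M y x).symm
  have hadj' : ∀ (M : UqH →L[ℂ] UqH) (x y : UqH), ⟪x, (star M) y⟫_ℂ = ⟪M x, y⟫_ℂ := by
    intro M x y
    have h := hadj (star M) x y
    rwa [star_star] at h
  have hcm : ∀ (M : UqH →L[ℂ] UqH), T * M = M * T → ∀ x, T (M x) = M (T x) := by
    intro M h x
    have := DFunLike.congr_fun h x
    simpa using this
  -- positivity facts
  have habs : ∀ n : ℕ, n ≠ 0 → ‖q‖ ^ n < 1 :=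
    fun n hn => pow_lt_one₀ (norm_nonneg q) hq1 hn
  have hcpos : ∀ d : ℕ, (0:ℝ) < Real.sqrt (1 - ‖q‖ ^ (2 * (d + 1))) := by
    intro d
    apply Real.sqrt_pos.mpr
    have := habs (2 * (d + 1)) (by omega)
    linarith
  -- A*A acts diagonally
  have hAA : ∀ (d : ℕ) (i j : ℤ),
      (star A) (A (e d i j)) = ((1 - ‖q‖ ^ (2 * (d + 1)) : ℝ) : ℂ) • e d i j := by
    intro d i j
    rw [hA, map_smul, hAs, smul_smul, ← Complex.ofReal_mul,
      Real.mul_self_sqrt (by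
        have := habs (2 * (d + 1)) (by omega); linarith)]
    norm_num
  -- off-diagonal vanishing in d
  have offdiag : ∀ (d d' : ℕ), d ≠ d' → ∀ (i i' j j' : ℤ),
      ⟪e d' i' j', T (e d i j)⟫_ℂ = 0 := by
    intro d d' hdd' i i' j j'
    have h1 : T ((star A) (A (e d i j))) = (star A) (A (T (e d i j))) := by
      rw [hcm (star A) hTAs, hcm A hTA]
    have h2 : ⟪e d' i' j', T ((star A) (A (e d i j)))⟫_ℂ =
        ((1 - ‖q‖ ^ (2 * (d + 1)) : ℝ) : ℂ) * ⟪e d' i' j', T (e d i j)⟫_ℂ := by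
      rw [hAA, map_smul, inner_smul_right]
    have h3 : ⟪e d' i' j', (star A) (A (T (e d i j)))⟫_ℂ =
        ((1 - ‖q‖ ^ (2 * (d' + 1)) : ℝ) : ℂ) * ⟪e d' i' j', T (e d i j)⟫_ℂ := by
      rw [hadj' A, hadj A, hAA, inner_smul_left, Complex.conj_ofReal]
    have heq : ((1 - ‖q‖ ^ (2 * (d + 1)) : ℝ) : ℂ) * ⟪e d' i' j', T (e d i j)⟫_ℂ =
        ((1 - ‖q‖ ^ (2 * (d' + 1)) : ℝ) : ℂ) * ⟪e d' i' j', T (e d i j)⟫_ℂ := by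
      rw [← h2, ← h3, h1]
    have hne : ((1 - ‖q‖ ^ (2 * (d + 1)) : ℝ) : ℂ) -
        ((1 - ‖q‖ ^ (2 * (d' + 1)) : ℝ) : ℂ) ≠ 0 := by
      rw [sub_ne_zero]
      intro h
      have hr : (1 - ‖q‖ ^ (2 * (d + 1)) : ℝ) =
          (1 - ‖q‖ ^ (2 * (d' + 1)) : ℝ) := by exact_mod_cast h
      have hp : ‖q‖ ^ (2 * (d + 1)) = ‖q‖ ^ (2 * (d' + 1)) := by linarith
      have := (pow_right_strictAnti₀ hq0 hq1).injective hp
      omega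
    have h4 : (((1 - ‖q‖ ^ (2 * (d + 1)) : ℝ) : ℂ) -
        ((1 - ‖q‖ ^ (2 * (d' + 1)) : ℝ) : ℂ)) * ⟪e d' i' j', T (e d i j)⟫_ℂ = 0 := by
      rw [sub_mul, heq, sub_self]
    exact (mul_eq_zero.mp h4).resolve_left hne
  -- diagonal d-reduction
  have relA : ∀ (d : ℕ) (i i' j j' : ℤ),
      ⟪e (d + 1) i' j', T (e (d + 1) i j)⟫_ℂ = ⟪e d i' j', T (e d i j)⟫_ℂ := by
    intro d i i' j j'
    have h1 : T (A (e d i j)) = A (T (e d i j)) := hcm A hTA _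
    have hL : ⟪e (d + 1) i' j', T (A (e d i j))⟫_ℂ =
        ((Real.sqrt (1 - ‖q‖ ^ (2 * (d + 1))) : ℝ) : ℂ) *
          ⟪e (d + 1) i' j', T (e (d + 1) i j)⟫_ℂ := by
      rw [hA, map_smul, inner_smul_right]
    have hR : ⟪e (d + 1) i' j', A (T (e d i j))⟫_ℂ =
        ((Real.sqrt (1 - ‖q‖ ^ (2 * (d + 1))) : ℝ) : ℂ) *
          ⟪e d i' j', T (e d i j)⟫_ℂ := by
      rw [hadj A, hAs, inner_smul_left, Complex.conj_ofReal]
      norm_num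
    have h2 : ((Real.sqrt (1 - ‖q‖ ^ (2 * (d + 1))) : ℝ) : ℂ) *
          ⟪e (d + 1) i' j', T (e (d + 1) i j)⟫_ℂ =
        ((Real.sqrt (1 - ‖q‖ ^ (2 * (d + 1))) : ℝ) : ℂ) *
          ⟪e d i' j', T (e d i j)⟫_ℂ := by
      rw [← hL, ← hR, h1]
    exact mul_left_cancel₀ (Complex.ofReal_ne_zero.mpr (hcpos d).ne') h2
  have dShift : ∀ (d : ℕ) (i i' j j' : ℤ),
      ⟪e d i' j', T (e d i j)⟫_ℂ = ⟪e 0 i' j', T (e 0 i j)⟫_ℂ := by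
    intro d
    induction d with
    | zero => intro i i' j j'; rfl
    | succ k ih => intro i i' j j'; rw [relA k, ih]
  -- i-shift relation from B
  have relB : ∀ (i i' j j' : ℤ),
      ⟪e 0 i' j', T (e 0 (i + 1) j)⟫_ℂ = ⟪e 0 (i' - 1) j', T (e 0 i j)⟫_ℂ := by
    intro i i' j j'
    have h1 : T (B (e 0 i j)) = B (T (e 0 i j)) := hcm B hTB _
    have hL : ⟪e 0 i' j', T (B (e 0 i j))⟫_ℂ = ⟪e 0 i' j', T (e 0 (i + 1) j)⟫_ℂ := by
      rw [hB, pow_zero, one_smul]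
    have hR : ⟪e 0 i' j', B (T (e 0 i j))⟫_ℂ = ⟪e 0 (i' - 1) j', T (e 0 i j)⟫_ℂ := by
      rw [hadj B, hBs, pow_zero, one_smul]
    rw [← hL, h1, hR]
  have iShift : ∀ (n : ℤ) (i j j' : ℤ),
      ⟪e 0 n j', T (e 0 i j)⟫_ℂ = ⟪e 0 0 j', T (e 0 (i - n) j)⟫_ℂ := by
    intro n
    induction n using Int.induction_on with
    | zero => intro i j j'; norm_num
    | succ n ih =>
      intro i j j'
      have h := relB (i - 1) ((n : ℤ) + 1) j j'
      rw [sub_add_cancel, add_sub_cancel_right] at h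
      rw [h, ih (i - 1) j j']
      have : i - 1 - (n : ℤ) = i - ((n : ℤ) + 1) := by ring
      rw [this]
    | pred n ih =>
      intro i j j'
      have h := relB i (-(n : ℤ)) j j'
      have h' : -(n : ℤ) - 1 = -(n : ℤ) - 1 := rfl
      rw [← h, ih (i + 1) j j']
      have : i + 1 - (-(n : ℤ)) = i - (-(n : ℤ) - 1) := by ring
      rw [this]
  -- j-shift relation from D
  have relD : ∀ (i i' j j' : ℤ),
      ⟪e 0 i' j', T (e 0 i (j + 1))⟫_ℂ =
        Complex.exp ((2 * (Real.pi : ℂ) * (θ : ℂ) * ((i : ℂ) - (i' : ℂ))) * Complex.I) *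
          ⟪e 0 i' (j' - 1), T (e 0 i j)⟫_ℂ := by
    intro i i' j j'
    have h1 : T (D (e 0 i j)) = D (T (e 0 i j)) := hcm D hTD _
    have hL : ⟪e 0 i' j', T (D (e 0 i j))⟫_ℂ =
        Complex.exp (-(2 * (Real.pi : ℂ) * (θ : ℂ) * (i : ℂ)) * Complex.I) *
          ⟪e 0 i' j', T (e 0 i (j + 1))⟫_ℂ := by
      rw [hD, map_smul, inner_smul_right]
    have hR : ⟪e 0 i' j', D (T (e 0 i j))⟫_ℂ =
        Complex.exp (-(2 * (Real.pi : ℂ) * (θ : ℂ) * (i' : ℂ)) * Complex.I) *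
          ⟪e 0 i' (j' - 1), T (e 0 i j)⟫_ℂ := by
      rw [hadj D, hDs, inner_smul_left, ← Complex.exp_conj]
      have hc : (starRingEnd ℂ) (2 * (Real.pi : ℂ) * (θ : ℂ) * (i' : ℂ) * Complex.I) =
          -(2 * (Real.pi : ℂ) * (θ : ℂ) * (i' : ℂ)) * Complex.I := by
        simp only [map_mul, Complex.conj_I, Complex.conj_ofReal, map_ofNat, map_intCast]
        ring
      rw [hc]
    have h2 : Complex.exp (-(2 * (Real.pi : ℂ) * (θ : ℂ) * (i : ℂ)) * Complex.I) *
          ⟪e 0 i' j', T (e 0 i (j + 1))⟫_ℂ =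
        Complex.exp (-(2 * (Real.pi : ℂ) * (θ : ℂ) * (i' : ℂ)) * Complex.I) *
          ⟪e 0 i' (j' - 1), T (e 0 i j)⟫_ℂ := by
      rw [← hL, h1, hR]
    apply mul_left_cancel₀ (Complex.exp_ne_zero
      (-(2 * (Real.pi : ℂ) * (θ : ℂ) * (i : ℂ)) * Complex.I))
    rw [h2, ← mul_assoc, ← Complex.exp_add]
    congr 2
    ring
  have jShift : ∀ (n : ℤ) (i i' j : ℤ),
      ⟪e 0 i' n, T (e 0 i j)⟫_ℂ =
        Complex.exp ((2 * (Real.pi : ℂ) * (θ : ℂ) * ((i : ℂ) - (i' : ℂ))) * Complex.I * (n : ℂ)) *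
          ⟪e 0 i' 0, T (e 0 i (j - n))⟫_ℂ := by
    intro n
    induction n using Int.induction_on with
    | zero => intro i i' j; norm_num
    | succ n ih =>
      intro i i' j
      have h := relD i i' (j - 1) ((n : ℤ) + 1)
      rw [sub_add_cancel, add_sub_cancel_right] at h
      rw [h, ih i i' (j - 1)]
      rw [← mul_assoc, ← Complex.exp_add]
      have hj : j - 1 - (n : ℤ) = j - ((n : ℤ) + 1) := by ring
      rw [hj]
      congr 2
      push_cast
      ring
    | pred n ih =>
      intro i i' j
      have h := relD i i' j (-(n : ℤ))
      have h2 := ih i i' (j + 1)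
      rw [h2] at h
      -- h : exp(c) * t(-n-1; j) = exp(c * (-n)) * t(0; (j+1) - (-n))
      apply mul_left_cancel₀ (Complex.exp_ne_zero
        ((2 * (Real.pi : ℂ) * (θ : ℂ) * ((i : ℂ) - (i' : ℂ))) * Complex.I))
      rw [← h, ← mul_assoc, ← Complex.exp_add]
      have hj : j + 1 - (-(n : ℤ)) = j - (-(n : ℤ) - 1) := by ring
      rw [hj]
      congr 2
      push_cast
      ring
  -- assembly
  intro d d' i i' j j'
  by_cases hd : d = d'
  · subst hd
    rw [if_pos rfl, one_mul, dShift, jShift j' i i' j, iShift i' i (j - j') 0]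
    congr 2
    push_cast
    ring
  · rw [if_neg hd, zero_mul, zero_mul]
    exact offdiag d d' hd i i' j j'
end
end

section
/- Let T be an element of the center of 𝒜, i.e., T ∈ 𝒜 and T commutes with every element of 𝒜. Then there exists a function c : ℤ → ℂ such that for all d, d′ ∈ ℕ and i, i′, j, j′ ∈ ℤ one has ⟨e_{d′,i′,j′}, T e_{d,i,j}⟩ = c(j − j′) if d = d′ and i = i′, and ⟨e_{d′,i′,j′}, T e_{d,i,j}⟩ = 0 otherwise. -/
open scoped InnerProductSpace
noncomputable section

lemma uq_e_def (d : ℕ) (i j : ℤ) : e d i j = lp.single 2 ((d, i, j) : ℕ × ℤ × ℤ) (1 : ℂ) := rfl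

lemma uq_inner_e_e (d' : ℕ) (i' j' : ℤ) (d : ℕ) (i j : ℤ) :
    ⟪e d' i' j', e d i j⟫_ℂ = if d = d' ∧ i = i' ∧ j = j' then 1 else 0 := by
  rw [uq_e_def, uq_e_def, lp.inner_single_left, lp.single_apply]
  by_cases h : d = d' ∧ i = i' ∧ j = j'
  · obtain ⟨rfl, rfl, rfl⟩ := h
    simp [RCLike.inner_apply]
  · rw [if_neg h, Pi.single_apply, if_neg ?_]
    · simp
    · intro hc
      apply h
      rw [Prod.ext_iff] at hc
      rw [Prod.ext_iff] at hc
      exact ⟨hc.1.symm, hc.2.1.symm, hc.2.2.symm⟩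

lemma uq_norm_e (d : ℕ) (i j : ℤ) : ‖e d i j‖ = 1 := by
  have := lp.norm_single (E := fun _ : ℕ × ℤ × ℤ => ℂ) (p := 2) (by norm_num) (d, i, j) (1 : ℂ)
  simpa [uq_e_def] using this

lemma uq_star_inner (X : UqH →L[ℂ] UqH) (x y : UqH) :
    ⟪(star X) x, y⟫_ℂ = ⟪x, X y⟫_ℂ := by
  rw [ContinuousLinearMap.star_eq_adjoint, ContinuousLinearMap.adjoint_inner_left]

def ent (T : UqH →L[ℂ] UqH) (d : ℕ) (i j : ℤ) (d' : ℕ) (i' j' : ℤ) : ℂ :=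
  ⟪e d' i' j', T (e d i j)⟫_ℂ

def alp (q : ℂ) (m : ℕ) : ℝ := Real.sqrt (1 - ‖q‖ ^ (2 * m))

set_option maxHeartbeats 1000000 in
/-- any element `T` of the center of `𝒜 = C(U_q(2))` has matrix coefficients
`⟨e_{d′,i′,j′}, T e_{d,i,j}⟩ = c(j − j′)` if `d = d′` and `i = i′`, and `0` otherwise,
for some function `c : ℤ → ℂ`. -/
theorem center_element_matrix_coefficients
    (q : ℂ) (hq0 : 0 < ‖q‖) (hq1 : ‖q‖ < 1)
    (θ : ℝ) (hθ : θ = Complex.arg q / Real.pi)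
    (A B D : UqH →L[ℂ] UqH)
    (hA : ∀ (i : ℕ) (j k : ℤ),
      A (e i j k) = ((Real.sqrt (1 - ‖q‖ ^ (2 * (i + 1))) : ℝ) : ℂ) • e (i + 1) j k)
    (hB : ∀ (i : ℕ) (j k : ℤ), B (e i j k) = (q ^ i) • e i (j + 1) k)
    (hD : ∀ (i : ℕ) (j k : ℤ),
      D (e i j k) = Complex.exp (-(2 * (Real.pi : ℂ) * (θ : ℂ) * (j : ℂ)) * Complex.I) • e i j (k + 1))
    (hAs : ∀ (i : ℕ) (j k : ℤ),
      (star A) (e i j k) = ((Real.sqrt (1 - ‖q‖ ^ (2 * i)) : ℝ) : ℂ) • e (i - 1) j k)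
    (hBs : ∀ (i : ℕ) (j k : ℤ), (star B) (e i j k) = ((starRingEnd ℂ) q ^ i) • e i (j - 1) k)
    (hDs : ∀ (i : ℕ) (j k : ℤ),
      (star D) (e i j k) = Complex.exp ((2 * (Real.pi : ℂ) * (θ : ℂ) * (j : ℂ)) * Complex.I) • e i j (k - 1))
    (𝒜 : StarSubalgebra ℂ (UqH →L[ℂ] UqH))
    (h𝒜 : 𝒜 = (StarAlgebra.adjoin ℂ ({A, B, D} : Set (UqH →L[ℂ] UqH))).topologicalClosure)
    (T : UqH →L[ℂ] UqH) (hT : T ∈ 𝒜) (hTcomm : ∀ S ∈ 𝒜, T * S = S * T) :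
    ∃ c : ℤ → ℂ, ∀ (d d' : ℕ) (i i' j j' : ℤ),
      ⟪e d' i' j', T (e d i j)⟫_ℂ = if d = d' ∧ i = i' then c (j - j') else 0 := by
  classical
  subst h𝒜
  have hQabs : (0:ℝ) ≤ ‖q‖ := norm_nonneg q
  have hAS : A ∈ StarAlgebra.adjoin ℂ ({A, B, D} : Set (UqH →L[ℂ] UqH)) :=
    StarAlgebra.subset_adjoin ℂ _ (by simp)
  have hBS : B ∈ StarAlgebra.adjoin ℂ ({A, B, D} : Set (UqH →L[ℂ] UqH)) :=
    StarAlgebra.subset_adjoin ℂ _ (by simp)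
  have hDS : D ∈ StarAlgebra.adjoin ℂ ({A, B, D} : Set (UqH →L[ℂ] UqH)) :=
    StarAlgebra.subset_adjoin ℂ _ (by simp)
  have hmem : ∀ {X : UqH →L[ℂ] UqH}, X ∈ StarAlgebra.adjoin ℂ ({A, B, D} : Set (UqH →L[ℂ] UqH)) →
      X ∈ (StarAlgebra.adjoin ℂ ({A, B, D} : Set (UqH →L[ℂ] UqH))).topologicalClosure :=
    fun hX => (StarAlgebra.adjoin ℂ ({A, B, D} : Set (UqH →L[ℂ] UqH))).le_topologicalClosure hX
  have appA : ∀ v, T (A v) = A (T v) := by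
    intro v
    have h := congrArg (fun Z : UqH →L[ℂ] UqH => Z v) (hTcomm A (hmem hAS))
    simpa [ContinuousLinearMap.mul_apply] using h
  have appAs : ∀ v, T ((star A) v) = (star A) (T v) := by
    intro v
    have h := congrArg (fun Z : UqH →L[ℂ] UqH => Z v) (hTcomm (star A) (hmem (star_mem hAS)))
    simpa [ContinuousLinearMap.mul_apply] using h
  have appB : ∀ v, T (B v) = B (T v) := by
    intro v
    have h := congrArg (fun Z : UqH →L[ℂ] UqH => Z v) (hTcomm B (hmem hBS))
    simpa [ContinuousLinearMap.mul_apply] using h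
  have appD : ∀ v, T (D v) = D (T v) := by
    intro v
    have h := congrArg (fun Z : UqH →L[ℂ] UqH => Z v) (hTcomm D (hmem hDS))
    simpa [ContinuousLinearMap.mul_apply] using h
  -- basic facts about alp
  have alp0 : alp q 0 = 0 := by simp [alp]
  have alpne : ∀ m : ℕ, ((alp q (m + 1) : ℝ) : ℂ) ≠ 0 := by
    intro m
    have h1 : ‖q‖ ^ (2 * (m + 1)) < 1 := pow_lt_one₀ hQabs hq1 (by omega)
    have h2 : (0:ℝ) < alp q (m + 1) := Real.sqrt_pos.mpr (by linarith)
    exact_mod_cast Complex.ofReal_ne_zero.mpr (ne_of_gt h2)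
  -- the A-relations
  have relA : ∀ (d : ℕ) (i j : ℤ) (d' : ℕ) (i' j' : ℤ),
      ((alp q (d + 1) : ℝ) : ℂ) * ent T (d + 1) i j d' i' j'
        = ((alp q d' : ℝ) : ℂ) * ent T d i j (d' - 1) i' j' := by
    intro d i j d' i' j'
    have h1 : ⟪e d' i' j', T (A (e d i j))⟫_ℂ
        = ((alp q (d + 1) : ℝ) : ℂ) * ent T (d + 1) i j d' i' j' := by
      rw [hA, map_smul, inner_smul_right]; rfl
    have h2 : ⟪e d' i' j', A (T (e d i j))⟫_ℂ
        = ((alp q d' : ℝ) : ℂ) * ent T d i j (d' - 1) i' j' := by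
      rw [← uq_star_inner A, hAs, inner_smul_left, Complex.conj_ofReal]; rfl
    rw [← h1, ← h2, appA]
  have relAs : ∀ (d : ℕ) (i j : ℤ) (d' : ℕ) (i' j' : ℤ),
      ((alp q d : ℝ) : ℂ) * ent T (d - 1) i j d' i' j'
        = ((alp q (d' + 1) : ℝ) : ℂ) * ent T d i j (d' + 1) i' j' := by
    intro d i j d' i' j'
    have h1 : ⟪e d' i' j', T ((star A) (e d i j))⟫_ℂ
        = ((alp q d : ℝ) : ℂ) * ent T (d - 1) i j d' i' j' := by
      rw [hAs, map_smul, inner_smul_right]; rfl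
    have h2 : ⟪e d' i' j', (star A) (T (e d i j))⟫_ℂ
        = ((alp q (d' + 1) : ℝ) : ℂ) * ent T d i j (d' + 1) i' j' := by
      rw [← uq_star_inner (star A), star_star, hA, inner_smul_left, Complex.conj_ofReal]; rfl
    rw [← h1, ← h2, appAs]
  -- off-diagonal in d vanishes
  have L1 : ∀ (d d' : ℕ) (i i' j j' : ℤ), d ≠ d' → ent T d i j d' i' j' = 0 := by
    intro d
    induction d with
    | zero =>
      intro d' i i' j j' hne
      match d', hne with
      | (e' + 1), _ =>
        have h := relAs 0 i j e' i' j'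
        rw [alp0] at h
        simp only [Complex.ofReal_zero, zero_mul] at h
        exact ((mul_eq_zero.mp h.symm).resolve_left (alpne e'))
    | succ d ih =>
      intro d' i i' j j' hne
      match d' with
      | 0 =>
        have h := relA d i j 0 i' j'
        rw [alp0] at h
        simp only [Complex.ofReal_zero, zero_mul] at h
        exact ((mul_eq_zero.mp h).resolve_left (alpne d))
      | (e' + 1) =>
        have h := relAs (d + 1) i j e' i' j'
        have hde : d ≠ e' := by omega
        rw [show d + 1 - 1 = d from rfl, ih e' i i' j j' hde] at h
        simp only [mul_zero] at h
        exact ((mul_eq_zero.mp h.symm).resolve_left (alpne e'))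
  -- diagonal entries independent of d
  have L2 : ∀ (d : ℕ) (i j i' j' : ℤ), ent T d i j d i' j' = ent T 0 i j 0 i' j' := by
    intro d
    induction d with
    | zero => intro i j i' j'; rfl
    | succ d ih =>
      intro i j i' j'
      have h := relAs (d + 1) i j d i' j'
      rw [show d + 1 - 1 = d from rfl] at h
      have h2 := mul_left_cancel₀ (alpne d) h
      rw [← h2, ih]
  
  have L3 : ∀ (i i' j j' : ℤ), ent T 0 (i + 1) j 0 (i' + 1) j' = ent T 0 i j 0 i' j' := by
    intro i i' j j'
    have h1 : T (B (e 0 i j)) = T (e 0 (i + 1) j) := by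
      rw [hB, pow_zero, one_smul]
    have h2 : ⟪e 0 (i' + 1) j', B (T (e 0 i j))⟫_ℂ = ent T 0 i j 0 i' j' := by
      rw [← uq_star_inner B, hBs, pow_zero, one_smul, add_sub_cancel_right]; rfl
    calc ent T 0 (i + 1) j 0 (i' + 1) j'
        = ⟪e 0 (i' + 1) j', T (B (e 0 i j))⟫_ℂ := by rw [h1]; rfl
      _ = ⟪e 0 (i' + 1) j', B (T (e 0 i j))⟫_ℂ := by rw [appB]
      _ = ent T 0 i j 0 i' j' := h2
  have L5 : ∀ (j j' : ℤ), ent T 0 0 (j + 1) 0 0 (j' + 1) = ent T 0 0 j 0 0 j' := by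
    intro j j'
    have h1 : T (D (e 0 0 j)) = T (e 0 0 (j + 1)) := by
      rw [hD]
      simp only [Int.cast_zero, mul_zero, neg_zero, zero_mul, Complex.exp_zero, one_smul]
    have h2 : ⟪e 0 0 (j' + 1), D (T (e 0 0 j))⟫_ℂ = ent T 0 0 j 0 0 j' := by
      rw [← uq_star_inner D, hDs]
      simp only [Int.cast_zero, mul_zero, zero_mul, Complex.exp_zero, one_smul,
        add_sub_cancel_right]
      rfl
    calc ent T 0 0 (j + 1) 0 0 (j' + 1)
        = ⟪e 0 0 (j' + 1), T (D (e 0 0 j))⟫_ℂ := by rw [h1]; rfl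
      _ = ⟪e 0 0 (j' + 1), D (T (e 0 0 j))⟫_ℂ := by rw [appD]
      _ = ent T 0 0 j 0 0 j' := h2
  have L3' : ∀ (k i i' j j' : ℤ), ent T 0 (i + k) j 0 (i' + k) j' = ent T 0 i j 0 i' j' := by
    intro k
    induction k using Int.induction_on with
    | zero => intro i i' j j'; norm_num
    | succ n ih =>
      intro i i' j j'
      rw [show i + ((n : ℤ) + 1) = i + n + 1 from by ring,
        show i' + ((n : ℤ) + 1) = i' + n + 1 from by ring, L3 (i + n) (i' + n) j j', ih]
    | pred n ih =>
      intro i i' j j'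
      have h1 := L3 (i + (-(n : ℤ) - 1)) (i' + (-(n : ℤ) - 1)) j j'
      rw [show i + (-(n : ℤ) - 1) + 1 = i + -(n : ℤ) from by ring,
        show i' + (-(n : ℤ) - 1) + 1 = i' + -(n : ℤ) from by ring] at h1
      rw [← h1, ih]
  have L5' : ∀ (k j j' : ℤ), ent T 0 0 (j + k) 0 0 (j' + k) = ent T 0 0 j 0 0 j' := by
    intro k
    induction k using Int.induction_on with
    | zero => intro j j'; norm_num
    | succ n ih =>
      intro j j'
      rw [show j + ((n : ℤ) + 1) = j + n + 1 from by ring,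
        show j' + ((n : ℤ) + 1) = j' + n + 1 from by ring, L5 (j + n) (j' + n), ih]
    | pred n ih =>
      intro j j'
      have h1 := L5 (j + (-(n : ℤ) - 1)) (j' + (-(n : ℤ) - 1))
      rw [show j + (-(n : ℤ) - 1) + 1 = j + -(n : ℤ) from by ring,
        show j' + (-(n : ℤ) - 1) + 1 = j' + -(n : ℤ) from by ring] at h1
      rw [← h1, ih]
  -- structural description of monomials in the generators
  have hmono : ∀ M ∈ Submonoid.closure
      (({A, B, D} : Set (UqH →L[ℂ] UqH)) ∪ star ({A, B, D} : Set (UqH →L[ℂ] UqH))),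
      ∃ (L : ℕ) (a b n : ℤ), ∀ d : ℕ, L ≤ d → ∀ i j : ℤ, ∃ (γ : ℂ) (d₂ : ℕ),
        (d₂ : ℤ) = (d : ℤ) + a ∧ ‖γ‖ ≤ 1 ∧ (b ≠ 0 → ‖γ‖ ≤ ‖q‖ ^ (d - L)) ∧
        M (e d i j) = γ • e d₂ (i + b) (j + n) := by
    intro M hM
    induction hM using Submonoid.closure_induction with
    | mem x hx =>
      have hx6 : x = A ∨ x = B ∨ x = D ∨ x = star A ∨ x = star B ∨ x = star D := by
        rcases hx with hx | hx
        · simp only [Set.mem_insert_iff, Set.mem_singleton_iff] at hx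
          tauto
        · rw [Set.mem_star] at hx
          simp only [Set.mem_insert_iff, Set.mem_singleton_iff] at hx
          rcases hx with h | h | h
          · exact Or.inr (Or.inr (Or.inr (Or.inl (by rw [← h, star_star]))))
          · exact Or.inr (Or.inr (Or.inr (Or.inr (Or.inl (by rw [← h, star_star])))))
          · exact Or.inr (Or.inr (Or.inr (Or.inr (Or.inr (by rw [← h, star_star])))))
      have hsqle : ∀ m : ℕ, ‖((Real.sqrt (1 - ‖q‖ ^ (2 * m)) : ℝ) : ℂ)‖ ≤ 1 := by
        intro m
        rw [Complex.norm_real, Real.norm_eq_abs, abs_of_nonneg (Real.sqrt_nonneg _)]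
        exact Real.sqrt_le_one.mpr (by nlinarith [pow_nonneg hQabs (2 * m)])
      have hexpnorm : ∀ x : ℝ, ‖Complex.exp ((x : ℂ) * Complex.I)‖ = 1 := by
        intro x
        rw [Complex.norm_exp_ofReal_mul_I]
      rcases hx6 with rfl | rfl | rfl | rfl | rfl | rfl
      · refine ⟨0, 1, 0, 0, fun d _ i j => ⟨((Real.sqrt (1 - ‖q‖ ^ (2 * (d + 1))) : ℝ) : ℂ), d + 1, by push_cast; ring,
          hsqle (d + 1), fun h => absurd rfl h, ?_⟩⟩
        rw [hA]; norm_num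
      · refine ⟨0, 0, 1, 0, fun d _ i j => ⟨q ^ d, d, by push_cast; ring, ?_, ?_, ?_⟩⟩
        · rw [norm_pow]; exact pow_le_one₀ hQabs hq1.le
        · intro _; rw [norm_pow, Nat.sub_zero]
        · rw [hB]; norm_num
      · refine ⟨0, 0, 0, 1, fun d _ i j => ⟨Complex.exp (-(2 * (Real.pi : ℂ) * (θ : ℂ) * (i : ℂ)) * Complex.I), d, by push_cast; ring, ?_, fun h => absurd rfl h, ?_⟩⟩
        · rw [show -(2 * (Real.pi : ℂ) * (θ : ℂ) * (i : ℂ)) = ((-(2 * Real.pi * θ * (i : ℝ)) : ℝ) : ℂ) from by push_cast; ring]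
          exact (hexpnorm _).le
        · rw [hD]; norm_num
      · refine ⟨1, -1, 0, 0, fun d hd i j => ⟨((Real.sqrt (1 - ‖q‖ ^ (2 * d)) : ℝ) : ℂ), d - 1, by omega,
          hsqle d, fun h => absurd rfl h, ?_⟩⟩
        rw [hAs]; norm_num
      · refine ⟨0, 0, -1, 0, fun d _ i j => ⟨((starRingEnd ℂ) q) ^ d, d, by push_cast; ring, ?_, ?_, ?_⟩⟩
        · rw [norm_pow, RCLike.norm_conj]
          exact pow_le_one₀ hQabs hq1.le
        · intro _; rw [norm_pow, RCLike.norm_conj, Nat.sub_zero]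
        · rw [hBs]
          rw [show i + (-1 : ℤ) = i - 1 from by ring, show j + (0 : ℤ) = j from by ring]
      · refine ⟨0, 0, 0, -1, fun d _ i j => ⟨Complex.exp ((2 * (Real.pi : ℂ) * (θ : ℂ) * (i : ℂ)) * Complex.I), d, by push_cast; ring, ?_, fun h => absurd rfl h, ?_⟩⟩
        · rw [show (2 * (Real.pi : ℂ) * (θ : ℂ) * (i : ℂ)) = (((2 * Real.pi * θ * (i : ℝ)) : ℝ) : ℂ) from by push_cast; ring]
          exact (hexpnorm _).le
        · rw [hDs]
          rw [show i + (0 : ℤ) = i from by ring, show j + (-1 : ℤ) = j - 1 from by ring]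
    | one =>
      refine ⟨0, 0, 0, 0, fun d _ i j => ⟨1, d, by push_cast; ring, by norm_num,
        fun h => absurd rfl h, ?_⟩⟩
      rw [ContinuousLinearMap.one_apply, one_smul]
      norm_num
    | mul x y hx hy ihx ihy =>
      obtain ⟨L₁, a₁, b₁, n₁, H₁⟩ := ihx
      obtain ⟨L₂, a₂, b₂, n₂, H₂⟩ := ihy
      refine ⟨L₁ + L₂ + a₂.natAbs, a₁ + a₂, b₁ + b₂, n₁ + n₂, fun d hd i j => ?_⟩
      obtain ⟨γ₂, d₂, hd₂, hγ₂1, hγ₂2, hy2⟩ := H₂ d (by omega) i j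
      obtain ⟨γ₁, d₃, hd₃, hγ₁1, hγ₁2, hx1⟩ := H₁ d₂ (by omega) (i + b₂) (j + n₂)
      refine ⟨γ₁ * γ₂, d₃, by omega, ?_, ?_, ?_⟩
      · rw [norm_mul]
        nlinarith [norm_nonneg γ₁, norm_nonneg γ₂]
      · intro hb
        rw [norm_mul]
        rcases eq_or_ne b₁ 0 with h1 | h1
        · have h2 : b₂ ≠ 0 := fun hc => hb (by rw [h1, hc]; ring)
          calc ‖γ₁‖ * ‖γ₂‖ ≤ 1 * (‖q‖ ^ (d - L₂)) := by
                have := hγ₂2 h2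
                nlinarith [norm_nonneg γ₂, norm_nonneg γ₁, pow_nonneg hQabs (d - L₂)]
            _ = ‖q‖ ^ (d - L₂) := one_mul _
            _ ≤ ‖q‖ ^ (d - (L₁ + L₂ + a₂.natAbs)) :=
                pow_le_pow_of_le_one hQabs hq1.le (by omega)
        · calc ‖γ₁‖ * ‖γ₂‖ ≤ (‖q‖ ^ (d₂ - L₁)) * 1 := by
                have := hγ₁2 h1
                nlinarith [norm_nonneg γ₂, norm_nonneg γ₁, pow_nonneg hQabs (d₂ - L₁)]
            _ = ‖q‖ ^ (d₂ - L₁) := mul_one _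
            _ ≤ ‖q‖ ^ (d - (L₁ + L₂ + a₂.natAbs)) :=
                pow_le_pow_of_le_one hQabs hq1.le (by omega)
      · rw [ContinuousLinearMap.mul_apply, hy2, map_smul, hx1, smul_smul,
          show i + b₂ + b₁ = i + (b₁ + b₂) from by ring,
          show j + n₂ + n₁ = j + (n₁ + n₂) from by ring, mul_comm γ₂ γ₁]
  -- entries of elements of the adjoin algebra tend to zero along the diagonal d when i ≠ i'
  have hX0 : ∀ X ∈ StarAlgebra.adjoin ℂ ({A, B, D} : Set (UqH →L[ℂ] UqH)),
      ∀ (i i' j j' : ℤ), i ≠ i' →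
      Filter.Tendsto (fun d : ℕ => ⟪e d i' j', X (e d i j)⟫_ℂ) Filter.atTop (nhds 0) := by
    intro X hX
    have hX2 : X ∈ Subalgebra.toSubmodule (Algebra.adjoin ℂ
        (({A, B, D} : Set (UqH →L[ℂ] UqH)) ∪ star ({A, B, D} : Set (UqH →L[ℂ] UqH)))) := hX
    rw [Algebra.adjoin_eq_span] at hX2
    clear hX
    induction hX2 using Submodule.span_induction with
    | mem M hM =>
      obtain ⟨L, a, b, n, H⟩ := hmono M hM
      intro i i' j j' hii
      have hgt : Filter.Tendsto (fun d : ℕ => ‖q‖ ^ (d - L)) Filter.atTop (nhds 0) :=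
        (tendsto_pow_atTop_nhds_zero_of_lt_one hQabs hq1).comp (Filter.tendsto_sub_atTop_nat L)
      refine squeeze_zero_norm' ?_ hgt
      rw [Filter.eventually_atTop]
      refine ⟨L, fun d hd => ?_⟩
      obtain ⟨γ, d₂, h1, h2, h3, h4⟩ := H d hd i j
      rw [h4, inner_smul_right, uq_inner_e_e]
      rcases eq_or_ne b 0 with hb | hb
      · rw [if_neg (by rw [hb]; intro hc; exact hii (by omega) )]
        simpa using pow_nonneg hQabs (d - L)
      · calc ‖γ * (if d₂ = d ∧ i + b = i' ∧ j + n = j' then (1:ℂ) else 0)‖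
            ≤ ‖γ‖ * 1 := by
              rw [norm_mul]
              have : ‖(if d₂ = d ∧ i + b = i' ∧ j + n = j' then (1:ℂ) else 0)‖ ≤ 1 := by
                split_ifs <;> simp
              nlinarith [norm_nonneg γ]
          _ = ‖γ‖ := mul_one _
          _ ≤ ‖q‖ ^ (d - L) := h3 hb
    | zero =>
      intro i i' j j' hii
      simpa using (tendsto_const_nhds : Filter.Tendsto (fun _ : ℕ => (0:ℂ)) Filter.atTop (nhds 0))
    | add x y hx' hy' ihx ihy =>
      intro i i' j j' hii
      have := (ihx i i' j j' hii).add (ihy i i' j j' hii)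
      simpa [ContinuousLinearMap.add_apply, inner_add_right] using this
    | smul a x hx' ihx =>
      intro i i' j j' hii
      have := (ihx i i' j j' hii).const_mul a
      simpa [ContinuousLinearMap.smul_apply, inner_smul_right] using this
  -- off-diagonal in i vanishes
  have L4 : ∀ (i i' j j' : ℤ), i ≠ i' → ent T 0 i j 0 i' j' = 0 := by
    intro i i' j j' hii
    by_contra h0
    have hpos : 0 < ‖ent T 0 i j 0 i' j'‖ / 2 := by
      have := norm_pos_iff.mpr h0
      linarith
    have hTc : T ∈ closure ((StarAlgebra.adjoin ℂ ({A, B, D} : Set (UqH →L[ℂ] UqH)) :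
        StarSubalgebra ℂ (UqH →L[ℂ] UqH)) : Set (UqH →L[ℂ] UqH)) := by
      rw [← StarSubalgebra.topologicalClosure_coe]
      exact hT
    obtain ⟨X, hXS, hdist⟩ := Metric.mem_closure_iff.mp hTc _ hpos
    have htd := hX0 X hXS i i' j j' hii
    have hev := (NormedAddCommGroup.tendsto_nhds_zero.mp htd) _ hpos
    rw [Filter.eventually_atTop] at hev
    obtain ⟨N, hN⟩ := hev
    have hsplit : ⟪e N i' j', T (e N i j)⟫_ℂ
        = ⟪e N i' j', (T - X) (e N i j)⟫_ℂ + ⟪e N i' j', X (e N i j)⟫_ℂ := by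
      rw [ContinuousLinearMap.sub_apply, inner_sub_right]
      ring
    have hb1 : ‖⟪e N i' j', (T - X) (e N i j)⟫_ℂ‖ ≤ ‖T - X‖ := by
      calc ‖⟪e N i' j', (T - X) (e N i j)⟫_ℂ‖
          ≤ ‖e N i' j'‖ * ‖(T - X) (e N i j)‖ := norm_inner_le_norm _ _
        _ = ‖(T - X) (e N i j)‖ := by rw [uq_norm_e, one_mul]
        _ ≤ ‖T - X‖ * ‖e N i j‖ := (T - X).le_opNorm _
        _ = ‖T - X‖ := by rw [uq_norm_e, mul_one]
    have heq : ent T 0 i j 0 i' j' = ⟪e N i' j', T (e N i j)⟫_ℂ := (L2 N i j i' j').symm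
    have hnorm : ‖ent T 0 i j 0 i' j'‖
        ≤ ‖⟪e N i' j', (T - X) (e N i j)⟫_ℂ‖ + ‖⟪e N i' j', X (e N i j)⟫_ℂ‖ := by
      rw [heq, hsplit]
      exact norm_add_le _ _
    have h5 : ‖T - X‖ < ‖ent T 0 i j 0 i' j'‖ / 2 := by
      rw [← dist_eq_norm]; exact hdist
    have h6 := hN N (le_refl N)
    linarith
  -- assemble
  refine ⟨fun n => ent T 0 0 n 0 0 0, ?_⟩
  intro d d' i i' j j'
  show ent T d i j d' i' j' = _
  split_ifs with h
  · obtain ⟨rfl, rfl⟩ := h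
    calc ent T d i j d i j' = ent T 0 i j 0 i j' := L2 d i j i j'
      _ = ent T 0 0 j 0 0 j' := by
          have := L3' i 0 0 j j'
          rw [zero_add] at this
          exact this
      _ = ent T 0 0 (j - j') 0 0 0 := by
          have := L5' j' (j - j') 0
          rw [show j - j' + j' = j from by ring, zero_add] at this
          exact this
  · rcases eq_or_ne d d' with rfl | hd
    · have hii : i ≠ i' := fun hc => h ⟨rfl, hc⟩
      rw [L2 d i j i' j']
      exact L4 i i' j j' hii
    · exact L1 d d' i i' j j' hd
end
end
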